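/- Policy improvement: in a finite MDP with γ ∈ [0,1), if a deterministic policy π' satisfies Q^π(s, π'(s)) ≥ V^π(s) for all states s (where π is any stationary policy), then V^{π'}(s) ≥ V^π(s) for all s. -/
import Mathlib


/-- Policy improvement: if a deterministic policy `π'` satisfies
`Q^π(s, π'(s)) ≥ V^π(s)` for all `s`, then `V^{π'}(s) ≥ V^π(s)` for all `s`. -/
theorem policy_improvement
    {S A : Type*} [Fintype S] [Nonempty S] [Fintype A]
    (Act : S → Finset A) (hAct : ∀ s, (Act s).Nonempty)
    (P : S → A → S → ℝ) (hPnn : ∀ s a s', 0 ≤ P s a s')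
    (hP1 : ∀ s a, (∑ s', P s a s') = 1)
    (R : S → A → ℝ) (γ : ℝ) (hγ0 : 0 ≤ γ) (hγ1 : γ < 1)
    (π : S → A → ℝ) (hπnn : ∀ s a, 0 ≤ π s a)
    (hπ1 : ∀ s, (∑ a ∈ Act s, π s a) = 1)
    (Vπ : S → ℝ)
    (hVπ : ∀ s, Vπ s =
      ∑ a ∈ Act s, π s a * (R s a + γ * ∑ s', P s a s' * Vπ s'))
    (Qπ : S → A → ℝ)
    (hQπ : ∀ s a, Qπ s a = R s a + γ * ∑ s', P s a s' * Vπ s')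
    (π' : S → A) (hπ' : ∀ s, π' s ∈ Act s)
    (himprove : ∀ s, Vπ s ≤ Qπ s (π' s))
    (Vπ' : S → ℝ)
    (hVπ' : ∀ s, Vπ' s = R s (π' s) + γ * ∑ s', P s (π' s) s' * Vπ' s') :
    ∀ s, Vπ s ≤ Vπ' s := by
  obtain ⟨s₀, -, hmax⟩ := Finset.exists_max_image (Finset.univ : Finset S)
    (fun t => Vπ t - Vπ' t) ⟨Classical.arbitrary S, Finset.mem_univ _⟩
  set M := Vπ s₀ - Vπ' s₀ with hMdef
  have hM : ∀ t, Vπ t - Vπ' t ≤ M := fun t => hmax t (Finset.mem_univ t)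
  have key : M ≤ γ * M := by
    have h1 : Vπ s₀ ≤ R s₀ (π' s₀) + γ * ∑ s', P s₀ (π' s₀) s' * Vπ s' := by
      have := himprove s₀; rwa [hQπ] at this
    have h2 : M ≤ γ * ∑ s', P s₀ (π' s₀) s' * (Vπ s' - Vπ' s') := by
      have := hVπ' s₀
      have hsplit : ∑ s', P s₀ (π' s₀) s' * (Vπ s' - Vπ' s')
          = (∑ s', P s₀ (π' s₀) s' * Vπ s') - ∑ s', P s₀ (π' s₀) s' * Vπ' s' := by
        rw [← Finset.sum_sub_distrib]; congr 1; ext s'; ring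
      rw [hsplit]
      have : Vπ s₀ - Vπ' s₀ ≤ (R s₀ (π' s₀) + γ * ∑ s', P s₀ (π' s₀) s' * Vπ s')
          - (R s₀ (π' s₀) + γ * ∑ s', P s₀ (π' s₀) s' * Vπ' s') := by
        rw [← hVπ' s₀]; linarith
      linarith [this]
    have h3 : ∑ s', P s₀ (π' s₀) s' * (Vπ s' - Vπ' s') ≤ M := by
      calc ∑ s', P s₀ (π' s₀) s' * (Vπ s' - Vπ' s')
          ≤ ∑ s', P s₀ (π' s₀) s' * M := by
            apply Finset.sum_le_sum
            intro i _
            exact mul_le_mul_of_nonneg_left (hM i) (hPnn _ _ _)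
        _ = M := by rw [← Finset.sum_mul, hP1, one_mul]
    calc M ≤ γ * ∑ s', P s₀ (π' s₀) s' * (Vπ s' - Vπ' s') := h2
      _ ≤ γ * M := mul_le_mul_of_nonneg_left h3 hγ0
  have hM0 : M ≤ 0 := by nlinarith
  intro s
  have := hM s
  linarith
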